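/- Let k ≥ 2 be an integer, a ≥ 1, b ≥ 0 integers with gcd(a,b)=1, and let p ≤ k be a prime with p ∤ a and v_p(k+1) < e_{p,k}, where e_{p,k} = ⌊log_p k⌋. Then p^{e_{p,k}-1} is not a period of n ↦ v_p(g_{k,a,b}(n)); i.e., there exists a positive integer n_0 with v_p(g_{k,a,b}(n_0 + p^{e_{p,k}-1})) ≠ v_p(g_{k,a,b}(n_0)). -/

import Mathlib

lemma aux_le_val {p : ℕ} (hp : p.Prime) {x j : ℕ} (hx : x ≠ 0) :
    p ^ j ∣ x ↔ j ≤ padicValNat p x := by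
  rw [hp.pow_dvd_iff_le_factorization hx, Nat.factorization_def _ hp]

lemma aux_val_eq {p : ℕ} (hp : p.Prime) {x j : ℕ} (hx : x ≠ 0)
    (h1 : p ^ j ∣ x) (h2 : ¬ p ^ (j+1) ∣ x) : padicValNat p x = j := by
  rw [aux_le_val hp hx] at h1 h2
  omega

lemma aux_lcm_val {p : ℕ} (hp : p.Prime) (s : Finset ℕ) (f : ℕ → ℕ) (h : ∀ i ∈ s, f i ≠ 0) :
    padicValNat p (s.lcm f) = s.sup fun i => padicValNat p (f i) := by
  classical
  induction s using Finset.induction with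
  | empty => simp
  | @insert a s ha ih =>
    have h1 : f a ≠ 0 := h a (Finset.mem_insert_self a s)
    have h2 : s.lcm f ≠ 0 := by
      rw [Ne, Finset.lcm_eq_zero_iff]
      rintro ⟨x, hx, hx0⟩
      exact h x (Finset.mem_insert_of_mem hx) hx0
    rw [Finset.lcm_insert, Finset.sup_insert]
    rw [← Nat.factorization_def _ hp, ← ih (fun i hi => h i (Finset.mem_insert_of_mem hi))]
    show (Nat.lcm (f a) (s.lcm f)).factorization p = _
    rw [Nat.factorization_lcm h1 h2, Finsupp.sup_apply, Nat.factorization_def _ hp,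
      Nat.factorization_def _ hp]

/-- the valuation of a term of the progression -/
def auxf (p a b : ℕ) : ℕ → ℕ := fun m => padicValNat p (b + m * a)

set_option maxHeartbeats 2000000 in
theorem stmt13 (k a b : ℕ) (hk : 2 ≤ k) (ha : 1 ≤ a) (hab : Nat.gcd a b = 1)
    (p : ℕ) (hp : p.Prime) (hpk : p ≤ k) (hpa : ¬ p ∣ a)
    (hv : padicValNat p (k + 1) < Nat.log p k) :
    ∃ n₀ : ℕ, 1 ≤ n₀ ∧
      padicValNat p ((∏ i ∈ Finset.range (k+1), (b + (n₀ + p ^ (Nat.log p k - 1) + i) * a)) /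
          (Finset.range (k+1)).lcm (fun i => b + (n₀ + p ^ (Nat.log p k - 1) + i) * a)) ≠
      padicValNat p ((∏ i ∈ Finset.range (k+1), (b + (n₀ + i) * a)) /
          (Finset.range (k+1)).lcm (fun i => b + (n₀ + i) * a)) := by
  classical
  haveI : Fact p.Prime := ⟨hp⟩
  have hp1 : 1 < p := hp.one_lt
  set e := Nat.log p k with he
  have he1 : 1 ≤ e := Nat.log_pos hp1 hpk
  set t := p ^ (e - 1) with ht
  set q := p ^ e with hq
  have hqt : q = p * t := by
    rw [hq, ht, ← pow_succ']
    congr 1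
    omega
  have ht1 : 1 ≤ t := Nat.one_le_pow _ _ (by omega)
  have hq2t : 2 * t ≤ q := by
    rw [hqt]; exact Nat.mul_le_mul_right t hp.two_le
  have hqk : q ≤ k := Nat.pow_log_le_self p (by omega)
  have hkq : k < p ^ (e + 1) := Nat.lt_pow_succ_log_self hp1 k
  set r := (k + 1) % q with hr
  set Q := (k + 1) / q with hQ
  have hk1 : q * Q + r = k + 1 := Nat.div_add_mod _ _
  have hq0 : 0 < q := by omega
  have hrq : r < q := Nat.mod_lt _ hq0
  have hr1 : 1 ≤ r := by
    rcases Nat.eq_zero_or_pos r with h0 | h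
    · exfalso
      have hdvd : q ∣ k + 1 := Nat.dvd_of_mod_eq_zero h0
      have := (aux_le_val hp (x := k + 1) (by omega)).mp hdvd
      omega
    · exact h
  have hQ1 : 1 ≤ Q := (Nat.one_le_div_iff hq0).mpr (by omega)
  set d := if r + t ≤ q then r + t - 1 else q - 1 with hd
  have hd1 : t ≤ d := by rw [hd]; split <;> omega
  have hd2 : d < q := by rw [hd]; split <;> omega
  have hd3 : k + 1 ≤ d + q * Q := by rw [hd]; split <;> omega
  have hd4 : d + q * Q ≤ k + t := by rw [hd]; split <;> omega
  set v := padicValNat p Q with hvQ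
  set J := e + 1 + v with hJ
  set G := e + v with hG
  have hpJ0 : 0 < p ^ J := Nat.pow_pos (by omega)
  have hkJ : k < p ^ J := lt_of_lt_of_le hkq (Nat.pow_le_pow_right (by omega) (by omega))
  have hqJ : q ≤ p ^ J := by rw [hq]; exact Nat.pow_le_pow_right (by omega) (by omega)
  -- coprimality
  have hcop : Nat.Coprime a p := (hp.coprime_iff_not_dvd.mpr hpa).symm
  have hcopJ : Nat.Coprime a (p ^ J) := hcop.pow_right J
  haveI : NeZero (p ^ J) := ⟨by omega⟩
  -- the p-adic root c
  set c : ℕ := ((-(b : ZMod (p ^ J))) * (a : ZMod (p ^ J))⁻¹).val with hc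
  have hcb : p ^ J ∣ b + c * a := by
    have h1 : ((b + c * a : ℕ) : ZMod (p ^ J)) = 0 := by
      push_cast
      rw [hc, ZMod.natCast_val, ZMod.cast_id]
      have hinv : (a : ZMod (p ^ J)) * (a : ZMod (p ^ J))⁻¹ = 1 := ZMod.coe_mul_inv_eq_one a hcopJ
      calc (b : ZMod (p ^ J)) + -(b : ZMod (p ^ J)) * (a : ZMod (p ^ J))⁻¹ * (a : ZMod (p ^ J))
          = (b : ZMod (p ^ J)) + -(b : ZMod (p ^ J)) * ((a : ZMod (p ^ J)) * (a : ZMod (p ^ J))⁻¹) := by ring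
        _ = 0 := by rw [hinv]; ring
    exact (ZMod.natCast_eq_zero_iff _ _).mp h1
  -- key divisibility characterization
  have hkey : ∀ j, j ≤ J → ∀ m : ℕ, (p ^ j ∣ b + m * a ↔ m ≡ c [MOD p ^ j]) := by
    intro j hj m
    have hjc : p ^ j ∣ b + c * a := dvd_trans (pow_dvd_pow p hj) hcb
    constructor
    · intro hm
      have h1 : b + m * a ≡ b + c * a [MOD p ^ j] :=
        ((Nat.modEq_zero_iff_dvd).mpr hm).trans ((Nat.modEq_zero_iff_dvd).mpr hjc).symm
      have h2 : m * a ≡ c * a [MOD p ^ j] := h1.add_left_cancel' b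
      have h3 : a * m ≡ a * c [MOD p ^ j] := by rwa [mul_comm m a, mul_comm c a] at h2
      exact Nat.ModEq.cancel_left_of_coprime (hcop.symm.pow_left j) h3
    · intro hm
      have h1 : b + m * a ≡ b + c * a [MOD p ^ j] := (hm.mul_right a).add_left b
      exact (Nat.modEq_zero_iff_dvd).mp (h1.trans ((Nat.modEq_zero_iff_dvd).mpr hjc))
  -- valuation function
  have hne : ∀ m : ℕ, 1 ≤ m → b + m * a ≠ 0 := by
    intro m hm
    have : 1 * 1 ≤ m * a := Nat.mul_le_mul hm ha
    omega
  have hfge : ∀ j, j ≤ J → ∀ m, 1 ≤ m → (j ≤ auxf p a b m ↔ m ≡ c [MOD p ^ j]) := by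
    intro j hj m hm
    rw [auxf, ← aux_le_val hp (hne m hm)]
    exact hkey j hj m
  -- choice of n
  set n := c + 2 * p ^ J - d with hn
  have hcpJ : c < p ^ J := ZMod.val_lt _
  have hn1 : 1 ≤ n := by omega
  have hnd : n + d = c + 2 * p ^ J := by omega
  have hndc : n + d ≡ c [MOD p ^ J] := by
    show (n + d) % p ^ J = c % p ^ J
    rw [hnd, Nat.add_mul_mod_self_right]
  have hVJ : J ≤ auxf p a b (n + d) := (hfge J le_rfl (n + d) (by omega)).mpr hndc
  -- uniqueness of the high point
  have huniq : ∀ m, n ≤ m → m ≤ n + k + t → J ≤ auxf p a b m → m = n + d := by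
    intro m h1 h2 h3
    have hmc : m ≡ c [MOD p ^ J] := (hfge J le_rfl m (by omega)).mp h3
    have hmd : m ≡ n + d [MOD p ^ J] := hmc.trans hndc.symm
    rcases le_or_gt (n + d) m with hle | hlt
    · have hdvd : p ^ J ∣ m - (n + d) := (Nat.modEq_iff_dvd' hle).mp hmd.symm
      rcases Nat.eq_zero_or_pos (m - (n + d)) with h0 | h0
      · omega
      · have := Nat.le_of_dvd h0 hdvd
        omega
    · have hdvd : p ^ J ∣ (n + d) - m := (Nat.modEq_iff_dvd' (le_of_lt hlt)).mp hmd
      rcases Nat.eq_zero_or_pos ((n + d) - m) with h0 | h0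
      · omega
      · have := Nat.le_of_dvd h0 hdvd
        omega
  -- f is bounded on the union of both windows by its value at n+d
  have hbound : ∀ m, n ≤ m → m ≤ n + k + t → auxf p a b m ≤ auxf p a b (n + d) := by
    intro m h1 h2
    by_cases h3 : J ≤ auxf p a b m
    · rw [huniq m h1 h2 h3]
    · omega
  -- value at the special right point
  have hmR : auxf p a b (n + d + q * Q) = G := by
    have hx : b + (n + d + q * Q) * a = (b + (n + d) * a) + q * Q * a := by ring
    have hyval : padicValNat p (q * Q * a) = G := by
      rw [padicValNat.mul (by positivity) (by omega), padicValNat.mul (by positivity) (by omega)]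
      rw [hq, padicValNat.prime_pow, padicValNat.eq_zero_of_not_dvd hpa]
      omega
    have hy0 : q * Q * a ≠ 0 := by positivity
    have hxdvd : p ^ G ∣ b + (n + d) * a := by
      rw [aux_le_val hp (hne _ (by omega))]
      have : J ≤ padicValNat p (b + (n + d) * a) := hVJ
      omega
    have hydvd : p ^ G ∣ q * Q * a := by
      rw [aux_le_val hp hy0, hyval]
    have hnot : ¬ p ^ (G + 1) ∣ (b + (n + d) * a) + q * Q * a := by
      intro hcon
      have hxd2 : p ^ (G + 1) ∣ b + (n + d) * a := by
        rw [aux_le_val hp (hne _ (by omega))]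
        have : J ≤ padicValNat p (b + (n + d) * a) := hVJ
        omega
      have hyd2 : p ^ (G + 1) ∣ q * Q * a := by
        have := Nat.dvd_sub hcon hxd2
        simpa using this
      rw [aux_le_val hp hy0, hyval] at hyd2
      omega
    show padicValNat p (b + (n + d + q * Q) * a) = G
    rw [hx]
    exact aux_val_eq hp (by have := hne (n + d) (by omega); omega) (dvd_add hxdvd hydvd) hnot
  -- fringe index bookkeeping
  set u := (k + 1) % t with hu
  have hut : u < t := Nat.mod_lt _ (by omega)
  set σ : ℕ → ℕ := fun i => (i + (t - u)) % t with hσ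
  set i₀ := d % t with hi₀
  have hi₀t : i₀ < t := Nat.mod_lt _ (by omega)
  set j₀ := d + q * Q - (k + 1) with hj₀
  have hj₀t : j₀ < t := by omega
  have hτσ : ∀ i, i < t → ((σ i) + u) % t = i := by
    intro i hi
    show ((i + (t - u)) % t + u) % t = i
    rw [Nat.mod_add_mod]
    have h1 : i + (t - u) + u = i + t := by omega
    rw [h1, Nat.add_mod_right, Nat.mod_eq_of_lt hi]
  have hστ : ∀ j, j < t → σ ((j + u) % t) = j := by
    intro j hj
    show ((j + u) % t + (t - u)) % t = j
    rw [Nat.mod_add_mod]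
    have h1 : j + u + (t - u) = j + t := by omega
    rw [h1, Nat.add_mod_right, Nat.mod_eq_of_lt hj]
  have hσlt : ∀ i, σ i < t := fun i => Nat.mod_lt _ (by omega)
  have hσmod : ∀ i, (σ i + (k + 1)) ≡ i [MOD t] := by
    intro i
    have h1 : σ i ≡ i + (t - u) [MOD t] := Nat.mod_modEq _ _
    have h2 : (k + 1 : ℕ) ≡ u [MOD t] := (Nat.mod_modEq _ _).symm
    have h3 : σ i + (k + 1) ≡ (i + (t - u)) + u [MOD t] := h1.add h2
    have h4 : (i + (t - u)) + u = i + t := by omega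
    have h5 : i + t ≡ i [MOD t] := by
      show (i + t) % t = i % t
      rw [Nat.add_mod_right]
    rw [h4] at h3
    exact h3.trans h5
  have hσi₀ : σ i₀ = j₀ := by
    have h1 : σ i₀ + (k + 1) ≡ i₀ [MOD t] := hσmod i₀
    have h2 : i₀ ≡ d [MOD t] := Nat.mod_modEq d t
    have h3 : d ≡ d + q * Q [MOD t] := by
      refine (Nat.modEq_iff_dvd' (by omega)).mpr ?_
      have h4 : d + q * Q - d = q * Q := by omega
      rw [h4, hqt]
      exact ⟨p * Q, by ring⟩
    have h5 : d + q * Q = j₀ + (k + 1) := by omega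
    rw [h5] at h3
    have h6 : σ i₀ + (k + 1) ≡ j₀ + (k + 1) [MOD t] := h1.trans (h2.trans h3)
    have h7 : σ i₀ ≡ j₀ [MOD t] := h6.add_right_cancel' (k + 1)
    have h8 : σ i₀ < t := hσlt i₀
    calc σ i₀ = σ i₀ % t := (Nat.mod_eq_of_lt h8).symm
      _ = j₀ % t := h7
      _ = j₀ := Nat.mod_eq_of_lt hj₀t
  have htpJ : (t : ℕ) ∣ p ^ J := by rw [ht]; exact pow_dvd_pow p (by omega)
  have hqpJ : (q : ℕ) ∣ p ^ J := by rw [hq]; exact pow_dvd_pow p (by omega)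
  have hndct : n + d ≡ c [MOD t] := hndc.of_dvd htpJ
  have hndcq : n + d ≡ c [MOD q] := hndc.of_dvd hqpJ
  have hi₀c : n + i₀ ≡ c [MOD t] := by
    have h1 : n + i₀ ≡ n + d [MOD t] := (Nat.mod_modEq d t).add_left n
    exact h1.trans hndct
  -- value at the special left point
  have hfi₀ : auxf p a b (n + i₀) = e - 1 := by
    have h1 : e - 1 ≤ auxf p a b (n + i₀) := by
      rw [hfge (e - 1) (by omega) _ (by omega), ← ht]
      exact hi₀c
    have h2 : ¬ (e ≤ auxf p a b (n + i₀)) := by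
      intro hcon
      have hcq : n + i₀ ≡ c [MOD q] := by
        have := (hfge e (by omega) _ (by omega)).mp hcon
        rwa [← hq] at this
      have h3 : n + i₀ ≡ n + d [MOD q] := hcq.trans hndcq.symm
      have h4 : q ∣ (n + d) - (n + i₀) := (Nat.modEq_iff_dvd' (by omega)).mp h3
      have h5 : (n + d) - (n + i₀) = d - i₀ := by omega
      rw [h5] at h4
      have h6 : 0 < d - i₀ := by omega
      have := Nat.le_of_dvd h6 h4
      omega
    omega
  -- pointwise equality off i₀
  have hpair : ∀ i, i < t → i ≠ i₀ → auxf p a b (n + (k + 1) + σ i) = auxf p a b (n + i) := by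
    intro i hit hnei
    have hm't : n + (k + 1) + σ i ≡ n + i [MOD t] := by
      have h1 : n + (σ i + (k + 1)) ≡ n + i [MOD t] := (hσmod i).add_left n
      have h2 : n + (k + 1) + σ i = n + (σ i + (k + 1)) := by ring
      rwa [h2]
    have hsmall : ¬ (e - 1 ≤ auxf p a b (n + i)) := by
      intro hcon
      have h1 : n + i ≡ c [MOD t] := by
        have := (hfge (e - 1) (by omega) _ (by omega)).mp hcon
        rwa [← ht] at this
      have h3 : n + i ≡ n + i₀ [MOD t] := h1.trans hi₀c.symm
      have h4 : i ≡ i₀ [MOD t] := h3.add_left_cancel' n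
      have h5 : i % t = i₀ % t := h4
      rw [Nat.mod_eq_of_lt hit, Nat.mod_eq_of_lt hi₀t] at h5
      exact hnei h5
    set j' := auxf p a b (n + i) with hj'
    have hj'e : j' + 1 ≤ e - 1 := by omega
    have h1 : n + i ≡ c [MOD p ^ j'] := (hfge j' (by omega) _ (by omega)).mp le_rfl
    have h2 : ¬ (n + i ≡ c [MOD p ^ (j' + 1)]) := by
      intro hcon
      have := (hfge (j' + 1) (by omega) _ (by omega)).mpr hcon
      omega
    have hdvd' : (p ^ (j' + 1) : ℕ) ∣ t := by rw [ht]; exact pow_dvd_pow p (by omega)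
    have h3 : n + (k + 1) + σ i ≡ n + i [MOD p ^ (j' + 1)] := hm't.of_dvd hdvd'
    have h4 : n + (k + 1) + σ i ≡ c [MOD p ^ j'] :=
      (h3.of_dvd (pow_dvd_pow p (by omega))).trans h1
    have h5 : ¬ (n + (k + 1) + σ i ≡ c [MOD p ^ (j' + 1)]) := fun hcon => h2 (h3.symm.trans hcon)
    have h6 : j' ≤ auxf p a b (n + (k + 1) + σ i) := (hfge j' (by omega) _ (by omega)).mpr h4
    have h7 : ¬ (j' + 1 ≤ auxf p a b (n + (k + 1) + σ i)) := by
      intro hcon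
      exact h5 ((hfge (j' + 1) (by omega) _ (by omega)).mp hcon)
    omega
  -- fringe sums
  set A := ∑ i ∈ Finset.range t, auxf p a b (n + i) with hA
  set B := ∑ i ∈ Finset.range t, auxf p a b (n + (k + 1) + i) with hB
  have hBσ : B = ∑ i ∈ Finset.range t, auxf p a b (n + (k + 1) + σ i) := by
    rw [hB]
    refine Finset.sum_nbij' (fun j => (j + u) % t) σ ?_ ?_ ?_ ?_ ?_
    · intro x hx
      exact Finset.mem_range.mpr (Nat.mod_lt _ (by omega))
    · intro x hx
      exact Finset.mem_range.mpr (hσlt x)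
    · intro x hx
      exact hστ x (Finset.mem_range.mp hx)
    · intro x hx
      exact hτσ x (Finset.mem_range.mp hx)
    · intro x hx
      rw [hστ x (Finset.mem_range.mp hx)]
  have hmemi₀ : i₀ ∈ Finset.range t := Finset.mem_range.mpr hi₀t
  have hBA : B + (e - 1) = A + G := by
    have hterm : auxf p a b (n + (k + 1) + σ i₀) = G := by
      rw [hσi₀]
      have h1 : n + (k + 1) + j₀ = n + d + q * Q := by omega
      rw [h1]
      exact hmR
    have hsum : ∑ i ∈ (Finset.range t).erase i₀, auxf p a b (n + (k + 1) + σ i)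
        = ∑ i ∈ (Finset.range t).erase i₀, auxf p a b (n + i) := by
      refine Finset.sum_congr rfl fun i hi => ?_
      have h1 := Finset.mem_of_mem_erase hi
      exact hpair i (Finset.mem_range.mp h1) (Finset.ne_of_mem_erase hi)
    have e1 : auxf p a b (n + (k + 1) + σ i₀)
        + ∑ i ∈ (Finset.range t).erase i₀, auxf p a b (n + (k + 1) + σ i)
        = ∑ i ∈ Finset.range t, auxf p a b (n + (k + 1) + σ i) :=
      Finset.add_sum_erase _ (fun i => auxf p a b (n + (k + 1) + σ i)) hmemi₀
    have e2 : auxf p a b (n + i₀) + ∑ i ∈ (Finset.range t).erase i₀, auxf p a b (n + i)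
        = ∑ i ∈ Finset.range t, auxf p a b (n + i) :=
      Finset.add_sum_erase _ (fun i => auxf p a b (n + i)) hmemi₀
    rw [hBσ, ← e1, hterm, hsum, hA, ← e2, hfi₀]
    omega
  -- window sums
  set S₁ := ∑ i ∈ Finset.range (k + 1), auxf p a b (n + i) with hS₁
  set S₂ := ∑ i ∈ Finset.range (k + 1), auxf p a b (n + t + i) with hS₂
  have hsplit : S₂ + (e - 1) = S₁ + G := by
    obtain ⟨K, hK⟩ : ∃ K, k + 1 = t + K := ⟨k + 1 - t, by omega⟩
    have h1 : S₁ = A + ∑ i ∈ Finset.range K, auxf p a b (n + t + i) := by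
      rw [hS₁, hK, Finset.sum_range_add]
      congr 1
      refine Finset.sum_congr rfl fun i _ => ?_
      congr 1
      omega
    have h2 : S₂ = (∑ i ∈ Finset.range K, auxf p a b (n + t + i)) + B := by
      have hK2 : k + 1 = K + t := by omega
      rw [hS₂, hK2, Finset.sum_range_add]
      congr 1
      rw [hB]
      refine Finset.sum_congr rfl fun i _ => ?_
      congr 1
      omega
    omega
  -- products and lcms
  have hterm1 : ∀ i ∈ Finset.range (k + 1), b + (n + i) * a ≠ 0 := fun i _ => hne _ (by omega)
  have hterm2 : ∀ i ∈ Finset.range (k + 1), b + (n + t + i) * a ≠ 0 := fun i _ => hne _ (by omega)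
  have hprod1 : padicValNat p (∏ i ∈ Finset.range (k + 1), (b + (n + i) * a)) = S₁ := by
    rw [← Nat.factorization_def _ hp, Nat.factorization_prod hterm1, Finsupp.finset_sum_apply]
    exact Finset.sum_congr rfl fun i _ => Nat.factorization_def _ hp
  have hprod2 : padicValNat p (∏ i ∈ Finset.range (k + 1), (b + (n + t + i) * a)) = S₂ := by
    rw [← Nat.factorization_def _ hp, Nat.factorization_prod hterm2, Finsupp.finset_sum_apply]
    exact Finset.sum_congr rfl fun i _ => Nat.factorization_def _ hp
  have hlcm1 : padicValNat p ((Finset.range (k + 1)).lcm (fun i => b + (n + i) * a))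
      = (Finset.range (k + 1)).sup fun i => auxf p a b (n + i) :=
    aux_lcm_val hp _ _ hterm1
  have hlcm2 : padicValNat p ((Finset.range (k + 1)).lcm (fun i => b + (n + t + i) * a))
      = (Finset.range (k + 1)).sup fun i => auxf p a b (n + t + i) :=
    aux_lcm_val hp _ _ hterm2
  have hdk : d < k + 1 := by omega
  have hsup1 : ((Finset.range (k + 1)).sup fun i => auxf p a b (n + i)) = auxf p a b (n + d) := by
    apply le_antisymm
    · refine Finset.sup_le fun i hi => ?_
      have hik := Finset.mem_range.mp hi
      exact hbound (n + i) (by omega) (by omega)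
    · exact Finset.le_sup (f := fun i => auxf p a b (n + i)) (Finset.mem_range.mpr hdk)
  have hsup2 : ((Finset.range (k + 1)).sup fun i => auxf p a b (n + t + i))
      = auxf p a b (n + d) := by
    apply le_antisymm
    · refine Finset.sup_le fun i hi => ?_
      have hik := Finset.mem_range.mp hi
      exact hbound (n + t + i) (by omega) (by omega)
    · have hw : auxf p a b (n + d) = auxf p a b (n + t + (d - t)) := by
        congr 1
        omega
      rw [hw]
      exact Finset.le_sup (f := fun i => auxf p a b (n + t + i))
        (Finset.mem_range.mpr (by omega))
  have hdvd1 : (Finset.range (k + 1)).lcm (fun i => b + (n + i) * a)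
      ∣ ∏ i ∈ Finset.range (k + 1), (b + (n + i) * a) :=
    Finset.lcm_dvd fun i hi => Finset.dvd_prod_of_mem _ hi
  have hdvd2 : (Finset.range (k + 1)).lcm (fun i => b + (n + t + i) * a)
      ∣ ∏ i ∈ Finset.range (k + 1), (b + (n + t + i) * a) :=
    Finset.lcm_dvd fun i hi => Finset.dvd_prod_of_mem _ hi
  have hV1 : auxf p a b (n + d) ≤ S₁ := by
    rw [hS₁]
    exact Finset.single_le_sum (f := fun i => auxf p a b (n + i)) (fun i _ => Nat.zero_le _)
      (Finset.mem_range.mpr hdk)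
  refine ⟨n, hn1, ?_⟩
  rw [padicValNat.div_of_dvd hdvd2, padicValNat.div_of_dvd hdvd1,
    hprod1, hprod2, hlcm1, hlcm2, hsup1, hsup2]
  omega
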